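/- Let L be the matrix-weighted Laplacian of an undirected matrix-weighted graph G, and let v_i, v_j be two vertices. If the intersection over all simple paths P from v_i to v_j of the subspace ker(P) := Σ_{edges e ∈ P} ker(A_e) is the zero subspace, then every x ∈ ker(L) satisfies x_i = x_j. -/

import Mathlib

open scoped Matrix


theorem blocks_eq_of_path_kernels_trivial {n d : ℕ}
    (E : Fin n → Fin n → Prop) [∀ i j, Decidable (E i j)]
    (hEsymm : ∀ i j, E i j → E j i) (hEirrefl : ∀ i, ¬ E i i)
    (A : Fin n → Fin n → Matrix (Fin d) (Fin d) ℝ)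
    (hApsd : ∀ i j, E i j → (A i j).PosSemidef)
    (hAsymm : ∀ i j, A i j = A j i)
    (i j : Fin n) (hij : i ≠ j)
    -- the intersection over all simple paths from `v_i` to `v_j` of the
    -- subspace sums of edge-weight kernels along the path is trivial
    (hker : (⨅ l : ℕ, ⨅ p : Fin (l + 1) → Fin n,
        ⨅ _ : Function.Injective p ∧ p 0 = i ∧ p (Fin.last l) = j ∧
          ∀ k : Fin l, E (p k.castSucc) (p k.succ),
        ⨆ k : Fin l, LinearMap.ker (A (p k.castSucc) (p k.succ)).mulVecLin) = ⊥) :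
    -- every `x` in the kernel of the matrix-weighted Laplacian has `x i = x j`
    ∀ x : Fin n → Fin d → ℝ,
      (∀ v : Fin n, (∑ w : Fin n,
          if E v w then (A v w).mulVec (x v - x w) else 0) = 0) →
      x i = x j := by
  intro x hx
  -- Step 1: every edge kills the difference of its endpoints' blocks
  have key : ∀ u v, E u v → (A u v).mulVec (x u - x v) = 0 := by
    set f : Fin n → Fin n → ℝ := fun v w =>
      if E v w then (x v - x w) ⬝ᵥ ((A v w).mulVec (x v - x w)) else 0 with hf
    set g : Fin n → Fin n → ℝ := fun v w =>
      if E v w then x v ⬝ᵥ ((A v w).mulVec (x v - x w)) else 0 with hg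
    have hfg : ∀ v w, f v w = g v w + g w v := by
      intro v w
      by_cases h : E v w
      · have h' : E w v := hEsymm _ _ h
        simp only [hf, hg, if_pos h, if_pos h']
        rw [hAsymm w v, show x w - x v = -(x v - x w) by ring,
          Matrix.mulVec_neg, dotProduct_neg, sub_dotProduct]
        ring
      · have h' : ¬ E w v := fun h'' => h (hEsymm _ _ h'')
        simp [hf, hg, h, h']
    have hdot : ∀ (u : Fin d → ℝ) (F : Fin n → Fin d → ℝ),
        u ⬝ᵥ (∑ w : Fin n, F w) = ∑ w : Fin n, u ⬝ᵥ F w := by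
      intro u F
      simp only [dotProduct, Finset.sum_apply, Finset.mul_sum]
      exact Finset.sum_comm
    have hgsum : ∑ v : Fin n, ∑ w : Fin n, g v w = 0 := by
      have : ∀ v : Fin n, ∑ w : Fin n, g v w
          = x v ⬝ᵥ (∑ w : Fin n, if E v w then (A v w).mulVec (x v - x w) else 0) := by
        intro v
        rw [hdot]
        refine Finset.sum_congr rfl fun w _ => ?_
        by_cases h : E v w <;> simp [hg, h]
      simp [this, hx]
    have hfsum : ∑ v : Fin n, ∑ w : Fin n, f v w = 0 := by
      have : ∑ v : Fin n, ∑ w : Fin n, f v w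
          = (∑ v : Fin n, ∑ w : Fin n, g v w) + (∑ v : Fin n, ∑ w : Fin n, g w v) := by
        simp [hfg, Finset.sum_add_distrib]
      have hcomm : ∑ v : Fin n, ∑ w : Fin n, g w v = ∑ v : Fin n, ∑ w : Fin n, g v w :=
        Finset.sum_comm
      rw [this, hcomm, hgsum, add_zero]
    have hnonneg : ∀ v w, 0 ≤ f v w := by
      intro v w
      by_cases h : E v w
      · simp only [hf, if_pos h]
        simpa using (hApsd v w h).dotProduct_mulVec_nonneg (x v - x w)
      · simp [hf, h]
    have hfzero : ∀ v w, f v w = 0 := by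
      have h1 := (Finset.sum_eq_zero_iff_of_nonneg
        (fun v _ => Finset.sum_nonneg fun w _ => hnonneg v w)).mp hfsum
      intro v w
      exact (Finset.sum_eq_zero_iff_of_nonneg fun w _ => hnonneg v w).mp
        (h1 v (Finset.mem_univ v)) w (Finset.mem_univ w)
    intro u v h
    have h0 : (x u - x v) ⬝ᵥ ((A u v).mulVec (x u - x v)) = 0 := by
      have := hfzero u v
      simpa [hf, if_pos h] using this
    have := ((hApsd u v h).dotProduct_mulVec_zero_iff (x u - x v)).mp (by
      simpa [star_trivial] using h0)
    exact this
  -- Step 2: x i - x j lies in every path-kernel subspace, hence in ⊥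
  have hmem : x i - x j ∈ (⊥ : Submodule ℝ (Fin d → ℝ)) := by
    rw [← hker]
    simp only [Submodule.mem_iInf]
    rintro l p ⟨hinj, h0, hl, hedge⟩
    have tel : ∑ k : Fin l, (x (p k.castSucc) - x (p k.succ))
        = x (p 0) - x (p (Fin.last l)) := by
      have h1 : ∑ k : Fin l, (x (p k.castSucc) - x (p k.succ))
          = ∑ m ∈ Finset.range l,
            ((fun m => x (p ⟨min m l, by omega⟩)) m
              - (fun m => x (p ⟨min m l, by omega⟩)) (m + 1)) := by
        rw [← Fin.sum_univ_eq_sum_range]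
        refine Finset.sum_congr rfl fun k _ => ?_
        have hk : (k : ℕ) < l := k.isLt
        have e1 : (⟨min ((k : ℕ)) l, by omega⟩ : Fin (l + 1)) = k.castSucc :=
          Fin.ext (by simp only [Fin.coe_castSucc]; omega)
        have e2 : (⟨min ((k : ℕ) + 1) l, by omega⟩ : Fin (l + 1)) = k.succ :=
          Fin.ext (by simp only [Fin.val_succ]; omega)
        dsimp only
        rw [e1, e2]
      rw [h1, Finset.sum_range_sub']
      have e3 : (⟨min 0 l, by omega⟩ : Fin (l + 1)) = 0 := Fin.ext (by simp)
      have e4 : (⟨min l l, by omega⟩ : Fin (l + 1)) = Fin.last l := Fin.ext (by simp)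
      rw [e3, e4]
    rw [← h0, ← hl, ← tel]
    refine Submodule.sum_mem _ fun k _ => Submodule.mem_iSup_of_mem k ?_
    rw [LinearMap.mem_ker, Matrix.mulVecLin_apply]
    exact key _ _ (hedge k)
  have := Submodule.mem_bot ℝ |>.mp hmem
  exact sub_eq_zero.mp this
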